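/- arXiv:1110.1674 — 2 statements merged into one kernel-verified Lean document; each statement's English description precedes it below -/
import Mathlib

section
/- Define f_i = Coef_m[(1 - z x_i)^{-1}·∏_{j=1}^n (1 - z x_j)^{m/n}] for i = 1,...,n. Then ∑_{i=1}^n f_i = 0. -/
open PowerSeries

/-- Generalized binomial coefficient `C(α, j) = α(α-1)⋯(α-j+1)/j!`. -/
noncomputable def gbinom (α : ℚ) (j : ℕ) : ℚ :=
  (∏ i ∈ Finset.range j, (α - i)) / (j.factorial : ℚ)

/-- The binomial series `(1 + w)^α = ∑_j C(α,j) w^j`, for a power series `w`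
(intended to have zero constant term, so that each coefficient is a finite sum). -/
noncomputable def fpow {R : Type*} [CommRing R] [Algebra ℚ R]
    (w : PowerSeries R) (α : ℚ) : PowerSeries R :=
  PowerSeries.mk fun k => ∑ j ∈ Finset.range (k + 1),
    gbinom α j • (PowerSeries.coeff k (w ^ j))

lemma gbinom_succ (α : ℚ) (k : ℕ) :
    ((k : ℚ) + 1) * gbinom α (k + 1) = (α - k) * gbinom α k := by
  unfold gbinom
  rw [Finset.prod_range_succ, Nat.factorial_succ]
  have h1 : ((k.factorial : ℚ)) ≠ 0 := Nat.cast_ne_zero.mpr k.factorial_ne_zero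
  push_cast
  field_simp

section Theta
variable {R : Type*} [CommRing R]

/-- The operator `z d/dz` on power series. -/
noncomputable def theta (φ : PowerSeries R) : PowerSeries R :=
  PowerSeries.mk fun k => (k : R) * PowerSeries.coeff k φ

lemma coeff_theta (φ : PowerSeries R) (k : ℕ) :
    PowerSeries.coeff k (theta φ) = (k : R) * PowerSeries.coeff k φ :=
  PowerSeries.coeff_mk _ _

lemma theta_one : theta (1 : PowerSeries R) = 0 := by
  ext k
  simp only [coeff_theta, PowerSeries.coeff_one, map_zero]
  split_ifs with h
  · subst h; simp
  · simp

lemma theta_mul (φ ψ : PowerSeries R) :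
    theta (φ * ψ) = theta φ * ψ + φ * theta ψ := by
  ext k
  simp only [coeff_theta, map_add, PowerSeries.coeff_mul, coeff_theta]
  rw [Finset.mul_sum, ← Finset.sum_add_distrib]
  refine Finset.sum_congr rfl fun p hp => ?_
  have h := Finset.HasAntidiagonal.mem_antidiagonal.mp hp
  have : (k : R) = (p.1 : R) + (p.2 : R) := by
    rw [← Nat.cast_add, h]
  rw [this]; ring

lemma theta_prod {ι : Type*} [DecidableEq ι] (s : Finset ι) (g : ι → PowerSeries R) :
    theta (∏ i ∈ s, g i) = ∑ i ∈ s, theta (g i) * ∏ j ∈ s.erase i, g j := by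
  induction s using Finset.induction_on with
  | empty => simp [theta_one]
  | @insert a s ha ih =>
    rw [Finset.prod_insert ha, theta_mul, ih, Finset.sum_insert ha,
      Finset.erase_insert ha, Finset.mul_sum]
    congr 1
    refine Finset.sum_congr rfl fun i hi => ?_
    have hai : a ≠ i := fun h => ha (h ▸ hi)
    rw [Finset.erase_insert_of_ne hai, Finset.prod_insert
      (fun h => ha (Finset.mem_of_mem_erase h))]
    ring
end Theta

section Key
variable {R : Type*} [CommRing R] [Algebra ℚ R]

lemma coeff_fpow_neg_CX (x : R) (α : ℚ) (k : ℕ) :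
    PowerSeries.coeff k (fpow (-(PowerSeries.C x * PowerSeries.X)) α)
      = algebraMap ℚ R (gbinom α k) * (-x) ^ k := by
  have hw : ∀ j : ℕ, (-(PowerSeries.C x * PowerSeries.X)) ^ j
      = PowerSeries.C ((-x) ^ j) * PowerSeries.X ^ j := by
    intro j
    rw [show -(PowerSeries.C x * PowerSeries.X) = PowerSeries.C (-x) * PowerSeries.X by
      simp [neg_mul], mul_pow, ← map_pow]
  rw [fpow, PowerSeries.coeff_mk]
  rw [Finset.sum_eq_single k]
  · rw [hw, PowerSeries.coeff_C_mul, PowerSeries.coeff_X_pow_self, mul_one,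
      Algebra.smul_def]
  · intro j hj hjk
    rw [hw, PowerSeries.coeff_C_mul, PowerSeries.coeff_X_pow, if_neg (Ne.symm hjk)]
    simp
  · intro h
    exact absurd (Finset.self_mem_range_succ k) h

lemma key_factor (x : R) (α : ℚ) :
    (1 - PowerSeries.C x * PowerSeries.X) * theta (fpow (-(PowerSeries.C x * PowerSeries.X)) α)
      = PowerSeries.C (algebraMap ℚ R α) *
        (((1 - PowerSeries.C x * PowerSeries.X) - 1) * fpow (-(PowerSeries.C x * PowerSeries.X)) α) := by
  set g := fpow (-(PowerSeries.C x * PowerSeries.X)) α with hg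
  have hrw : ∀ (φ : PowerSeries R), (1 - PowerSeries.C x * PowerSeries.X) * φ
      = φ - PowerSeries.C x * (PowerSeries.X * φ) := by intro φ; ring
  ext k
  rw [hrw, show ((1 - PowerSeries.C x * PowerSeries.X) - 1) * g
      = -(PowerSeries.C x * (PowerSeries.X * g)) by ring]
  cases k with
  | zero =>
    have h0 : (PowerSeries.constantCoeff) (theta g) = 0 := by
      have := coeff_theta g 0; simpa using this
    simp [h0, coeff_theta, PowerSeries.coeff_C_mul, PowerSeries.coeff_zero_X_mul]
  | succ k =>
    rw [map_sub, PowerSeries.coeff_C_mul, PowerSeries.coeff_succ_X_mul, coeff_theta, coeff_theta,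
      PowerSeries.coeff_C_mul, map_neg, PowerSeries.coeff_C_mul, PowerSeries.coeff_succ_X_mul,
      hg]
    simp only [coeff_fpow_neg_CX]
    have hq : ((k : ℚ) + 1) * gbinom α (k + 1) + (k : ℚ) * gbinom α k = α * gbinom α k := by
      have := gbinom_succ α k; linarith
    have hR : ((k : R) + 1) * algebraMap ℚ R (gbinom α (k + 1))
        + (k : R) * algebraMap ℚ R (gbinom α k)
        = algebraMap ℚ R α * algebraMap ℚ R (gbinom α k) := by
      have := congrArg (algebraMap ℚ R) hq
      simpa [map_add, map_mul, map_natCast] using this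
    push_cast
    rw [pow_succ]
    linear_combination ((-x) ^ k * (-x)) * hR

end Key

/-- With `f_i = Coef_m[(1 - z x_i)⁻¹ ∏ j, (1 - z x_j)^{m/n}]`, one has `∑ i, f_i = 0`. -/
theorem sum_f_eq_zero (m n : ℕ) (hm : 0 < m) (hn : 0 < n) (hmn : Nat.Coprime m n)
    (F : PowerSeries (MvPolynomial (Fin n) ℂ))
    (hF : F = ∏ j : Fin n,
      fpow (-(PowerSeries.C (MvPolynomial.X j) * PowerSeries.X))
        ((m : ℚ) / n))
    (B : Fin n → PowerSeries (MvPolynomial (Fin n) ℂ))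
    (hB : ∀ i, B i = PowerSeries.invOfUnit
      (1 - PowerSeries.C (MvPolynomial.X i) * PowerSeries.X) 1 * F)
    (f : Fin n → MvPolynomial (Fin n) ℂ) (hf : ∀ i, f i = PowerSeries.coeff m (B i)) :
    ∑ i : Fin n, f i = 0 := by
  classical
  set α : ℚ := (m : ℚ) / n with hα
  set a : MvPolynomial (Fin n) ℂ := algebraMap ℚ (MvPolynomial (Fin n) ℂ) α with ha
  set g : Fin n → PowerSeries (MvPolynomial (Fin n) ℂ) := fun j =>
    fpow (-(PowerSeries.C (MvPolynomial.X j) * PowerSeries.X)) α with hgdef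
  set U : Fin n → PowerSeries (MvPolynomial (Fin n) ℂ) := fun i =>
    1 - PowerSeries.C (MvPolynomial.X i) * PowerSeries.X with hUdef
  set V : Fin n → PowerSeries (MvPolynomial (Fin n) ℂ) := fun i => PowerSeries.invOfUnit (U i) 1 with hVdef
  have hUV : ∀ i, U i * V i = 1 := by
    intro i
    refine PowerSeries.mul_invOfUnit _ 1 ?_
    simp [hUdef]
  have hθg : ∀ i, theta (g i) = PowerSeries.C a * (g i - V i * g i) := by
    intro i
    have hk := key_factor (R := MvPolynomial (Fin n) ℂ) (MvPolynomial.X i) α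
    calc theta (g i) = (V i * U i) * theta (g i) := by rw [mul_comm (V i), hUV i, one_mul]
      _ = V i * (U i * theta (g i)) := by ring
      _ = V i * (PowerSeries.C (algebraMap ℚ (MvPolynomial (Fin n) ℂ) α) * (((U i) - 1) * g i)) := by
          rw [hUdef, hgdef]; simp only []; rw [hk]
      _ = PowerSeries.C a * (g i - V i * g i) := by
          rw [← ha]; linear_combination (PowerSeries.C a * g i) * (hUV i)
  have hprod : ∀ i : Fin n, g i * ∏ j ∈ Finset.univ.erase i, g j = F := by
    intro i
    rw [hF]
    exact Finset.mul_prod_erase _ _ (Finset.mem_univ i)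
  have hθF : theta F = (n : ℕ) • (PowerSeries.C a * F)
      - PowerSeries.C a * ∑ i : Fin n, V i * F := by
    rw [hF, theta_prod]
    have : ∀ i : Fin n, theta (g i) * ∏ j ∈ Finset.univ.erase i, g j
        = PowerSeries.C a * F - PowerSeries.C a * (V i * F) := by
      intro i
      rw [hθg i, ← hprod i]
      ring
    rw [Finset.sum_congr rfl fun i _ => this i, Finset.sum_sub_distrib,
      Finset.sum_const, Finset.card_univ, Fintype.card_fin, ← Finset.mul_sum, ← hF]
  have hcoeff := congrArg (PowerSeries.coeff m) hθF
  rw [coeff_theta, map_sub, map_nsmul, PowerSeries.coeff_C_mul, PowerSeries.coeff_C_mul,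
    map_sum] at hcoeff
  have hfi : ∀ i : Fin n, PowerSeries.coeff m (V i * F) = f i := by
    intro i
    rw [hf i, hB i]
  rw [Finset.sum_congr rfl fun i _ => hfi i] at hcoeff
  set v : (MvPolynomial (Fin n) ℂ) := PowerSeries.coeff m F with hv
  have hna : (n : ℕ) • (a * v) = (m : (MvPolynomial (Fin n) ℂ)) * v := by
    have h1 : (n : ℚ) * α = (m : ℚ) := by
      rw [hα]; field_simp
    have h2 : (n : (MvPolynomial (Fin n) ℂ)) * a = (m : (MvPolynomial (Fin n) ℂ)) := by
      rw [ha, ← map_natCast (algebraMap ℚ (MvPolynomial (Fin n) ℂ)) n, ← map_mul, h1, map_natCast]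
    rw [nsmul_eq_mul, ← mul_assoc, h2]
  rw [hna] at hcoeff
  have hS : a * ∑ i : Fin n, f i = 0 := sub_eq_self.mp hcoeff.symm
  have hαne : α ≠ 0 := by
    rw [hα]
    exact div_ne_zero (Nat.cast_ne_zero.mpr hm.ne') (Nat.cast_ne_zero.mpr hn.ne')
  have hane : a ≠ 0 := by
    rw [ha]
    intro h
    exact hαne ((algebraMap ℚ (MvPolynomial (Fin n) ℂ)).injective (by rw [h, map_zero]))
  rcases mul_eq_zero.mp hS with h | h
  · exact absurd h hane
  · exact h
end

section
/- Let n = 3, m = 4, and let J ⊂ ℚ[u_2, u_3] be the ideal generated by u_2·u_3 and 2u_3² - (4/9)u_2³ (equivalently by u_2 u_3 and 9u_3² - 2u_2³). Then the quotient ring ℚ[u_2,u_3]/J is a 5-dimensional vector space over ℚ with basis given by the images of 1, u_2, u_2², u_2³, u_3. -/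
open MvPolynomial

noncomputable section QB34aux

abbrev R2 : Type := MvPolynomial (Fin 2) ℚ

def L34 (p : R2) : Fin 5 → ℚ :=
  ![coeff 0 p, coeff (Finsupp.single 0 1) p, coeff (Finsupp.single 0 2) p,
    coeff (Finsupp.single 0 3) p + (2/9) * coeff (Finsupp.single 1 2) p,
    coeff (Finsupp.single 1 1) p]

lemma L34_add (p q : R2) : L34 (p + q) = L34 p + L34 q := by
  funext i
  fin_cases i <;> (simp [L34, coeff_add]; try ring)

lemma nle_single (i : Fin 2) (k : ℕ) (m : Fin 2 →₀ ℕ) (h : m i < k) :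
    ¬ Finsupp.single i k ≤ m := fun hle =>
  absurd (by simpa using Finsupp.le_def.mp hle i) (not_le.mpr h)

lemma nle_g1 (m : Fin 2 →₀ ℕ) (h : m 0 = 0 ∨ m 1 = 0) :
    ¬ (Finsupp.single (0 : Fin 2) 1 + Finsupp.single 1 1 ≤ m) := by
  intro hle
  rcases h with h | h
  · have := Finsupp.le_def.mp hle 0; simp [Finsupp.single_apply, h] at this
  · have := Finsupp.le_def.mp hle 1; simp [Finsupp.single_apply, h] at this

lemma coeff_mul_g1 (p : R2) (m : Fin 2 →₀ ℕ) (h : m 0 = 0 ∨ m 1 = 0) :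
    coeff m (p * (X 0 * X 1)) = 0 := by
  have hmono : (X 0 * X 1 : R2) = monomial (Finsupp.single 0 1 + Finsupp.single 1 1) 1 := by
    rw [X, X, monomial_mul, one_mul]
  rw [hmono, coeff_mul_monomial', if_neg (nle_g1 m h)]

def g2 : R2 := 2 * X 1 ^ 2 - C (4/9 : ℚ) * X 0 ^ 3

lemma coeff_mul_g2 (p : R2) (m : Fin 2 →₀ ℕ) :
    coeff m (p * g2) =
      (if Finsupp.single 1 2 ≤ m then coeff (m - Finsupp.single 1 2) p * 2 else 0)
      - (if Finsupp.single 0 3 ≤ m then coeff (m - Finsupp.single 0 3) p * (4/9) else 0) := by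
  have h2 : (2 * X 1 ^ 2 : R2) = monomial (Finsupp.single 1 2) 2 := by
    rw [← C_mul_X_pow_eq_monomial, map_ofNat]
  have h3 : (C (4/9 : ℚ) * X 0 ^ 3 : R2) = monomial (Finsupp.single 0 3) (4/9 : ℚ) := by
    rw [← C_mul_X_pow_eq_monomial]
  rw [g2, h2, h3, mul_sub, coeff_sub, coeff_mul_monomial', coeff_mul_monomial']

lemma L34_mul_g1 (p : R2) : L34 (p * (X 0 * X 1)) = 0 := by
  funext i
  fin_cases i
  · exact coeff_mul_g1 p 0 (Or.inl rfl)
  · exact coeff_mul_g1 p _ (Or.inr (by simp [Finsupp.single_apply]))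
  · exact coeff_mul_g1 p _ (Or.inr (by simp [Finsupp.single_apply]))
  · show coeff (Finsupp.single 0 3) (p * (X 0 * X 1))
        + (2/9) * coeff (Finsupp.single 1 2) (p * (X 0 * X 1)) = 0
    rw [coeff_mul_g1 p _ (Or.inr (by simp [Finsupp.single_apply])),
      coeff_mul_g1 p _ (Or.inl (by simp [Finsupp.single_apply]))]
    ring
  · exact coeff_mul_g1 p _ (Or.inl (by simp [Finsupp.single_apply]))

lemma L34_mul_g2 (p : R2) : L34 (p * g2) = 0 := by
  have e1 : ∀ m : Fin 2 →₀ ℕ, m 1 < 2 → m 0 < 3 → coeff m (p * g2) = 0 := by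
    intro m h1 h0
    rw [coeff_mul_g2, if_neg (nle_single _ _ _ h1), if_neg (nle_single _ _ _ h0)]
    ring
  funext i
  fin_cases i
  · exact e1 0 (by simp) (by simp)
  · exact e1 _ (by simp [Finsupp.single_apply]) (by simp [Finsupp.single_apply])
  · exact e1 _ (by simp [Finsupp.single_apply]) (by simp [Finsupp.single_apply])
  · show coeff (Finsupp.single 0 3) (p * g2) + (2/9) * coeff (Finsupp.single 1 2) (p * g2) = 0
    rw [coeff_mul_g2, coeff_mul_g2,
      if_neg (nle_single 1 2 _ (by simp [Finsupp.single_apply])),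
      if_pos le_rfl,
      if_pos le_rfl,
      if_neg (nle_single 0 3 _ (by simp [Finsupp.single_apply]))]
    simp
    ring
  · exact e1 _ (by simp [Finsupp.single_apply]) (by simp [Finsupp.single_apply])

end QB34aux

section QB34b
open MvPolynomial

lemma hC1 : (C (9/4:ℚ) : R2) * C (4/9 : ℚ) = 1 := by
  rw [← C_mul]; norm_num

lemma hC2 : (C (1/2:ℚ) : R2) * 2 = 1 := by
  rw [show (2:R2) = C 2 from (map_ofNat C 2).symm, ← C_mul]; norm_num

lemma hC3 : (C (1/2:ℚ) : R2) * C (4/9 : ℚ) = C (2/9 : ℚ) := by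
  rw [← C_mul]; norm_num

lemma X04_eq : (X 0 : R2)^4 = C (9/4:ℚ) * (2 * X 1 * (X 0 * X 1) - X 0 * g2) := by
  rw [g2]
  linear_combination (-(X 0:R2)^4) * hC1

lemma X1sq_eq : (X 1:R2)^2 - C (2/9:ℚ) * X 0^3 = C (1/2:ℚ) * g2 := by
  rw [g2]
  linear_combination (-(X 1:R2)^2) * hC2 + (X 0:R2)^3 * hC3

end QB34b

set_option maxHeartbeats 1000000 in
set_option synthInstance.maxHeartbeats 400000 in
/-- For `J = (u₂u₃, 2u₃² - (4/9)u₂³) ⊂ ℚ[u₂,u₃]`, the quotient `ℚ[u₂,u₃]/J` is a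
5-dimensional `ℚ`-vector space with basis the images of `1, u₂, u₂², u₂³, u₃`. -/
theorem quotient_basis_34
    (J : Ideal (MvPolynomial (Fin 2) ℚ))
    (hJ : J = Ideal.span {MvPolynomial.X 0 * MvPolynomial.X 1,
      2 * MvPolynomial.X 1 ^ 2 - MvPolynomial.C (4 / 9 : ℚ) * MvPolynomial.X 0 ^ 3}) :
    ∃ b : Module.Basis (Fin 5) ℚ (MvPolynomial (Fin 2) ℚ ⧸ J),
      ∀ i, b i = Ideal.Quotient.mk J
        (![1, MvPolynomial.X 0, MvPolynomial.X 0 ^ 2, MvPolynomial.X 0 ^ 3,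
           MvPolynomial.X 1] i) := by
  -- the image family
  set P : Fin 5 → R2 := ![1, X 0, X 0 ^ 2, X 0 ^ 3, X 1] with hP
  set v : Fin 5 → (MvPolynomial (Fin 2) ℚ ⧸ J) := fun i => Ideal.Quotient.mk J (P i) with hv
  have hmk_smul : ∀ (a : ℚ) (q : R2),
      Ideal.Quotient.mk J (a • q) = a • Ideal.Quotient.mk J q := fun a q => by
    rw [← Ideal.Quotient.mkₐ_eq_mk (R₁ := ℚ)]
    exact map_smul _ a q
  -- membership facts
  have hg1 : (X 0 * X 1 : R2) ∈ J := by
    rw [hJ]; exact Ideal.subset_span (Set.mem_insert _ _)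
  have hg2 : g2 ∈ J := by
    rw [hJ]; exact Ideal.subset_span (Set.mem_insert_of_mem _ rfl)
  have hX04 : (X 0 : R2) ^ 4 ∈ J := by
    rw [X04_eq]
    exact Ideal.mul_mem_left _ _
      (J.sub_mem (Ideal.mul_mem_left _ _ hg1) (Ideal.mul_mem_left _ _ hg2))
  have hX1sq : (X 1 : R2) ^ 2 - C (2/9 : ℚ) * X 0 ^ 3 ∈ J := by
    rw [X1sq_eq]; exact Ideal.mul_mem_left _ _ hg2
  -- L34 kills J
  have hLJ : ∀ x ∈ J, L34 x = 0 := by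
    intro x hx
    rw [hJ] at hx
    have key : ∀ p : R2, L34 (p * x) = 0 := by
      induction hx using Submodule.span_induction with
      | mem y hy =>
        intro p
        rcases hy with rfl | hy
        · exact L34_mul_g1 p
        · rw [Set.mem_singleton_iff] at hy
          rw [hy]
          exact L34_mul_g2 p
      | zero =>
        intro p
        rw [mul_zero]
        funext i
        fin_cases i <;> simp [L34]
      | add x y hx hy ihx ihy =>
        intro p
        rw [mul_add, L34_add, ihx p, ihy p, add_zero]
      | smul a x hx ih =>
        intro p
        rw [smul_eq_mul, ← mul_assoc]
        exact ih (p * a)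
    simpa using key 1
  -- linear independence
  have hli : LinearIndependent ℚ v := by
    rw [Fintype.linearIndependent_iff]
    intro c hc
    have hsum : Ideal.Quotient.mk J (∑ i, c i • P i) = 0 := by
      rw [map_sum, ← hc]
      exact Finset.sum_congr rfl fun i _ => hmk_smul _ _
    have hq := hLJ _ (Ideal.Quotient.eq_zero_iff_mem.mp hsum)
    intro i
    have hi := congrFun hq i
    fin_cases i <;>
      simpa [L34, hP, Fin.sum_univ_five, coeff_add, coeff_smul, coeff_zero_one, coeff_C,
        coeff_one, coeff_X_pow, coeff_X', Finsupp.single_eq_single_iff, Finsupp.single_eq_zero,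
        eq_comm] using hi
  -- key products
  have key : ∀ (i : Fin 5) (n : Fin 2),
      v i * Ideal.Quotient.mk J (X n) ∈ Submodule.span ℚ (Set.range v) := by
    have hmul : ∀ (a b : R2), Ideal.Quotient.mk J a * Ideal.Quotient.mk J b
        = Ideal.Quotient.mk J (a * b) := fun a b => (map_mul _ _ _).symm
    have k00 : v 0 * Ideal.Quotient.mk J (X 0) ∈ Submodule.span ℚ (Set.range v) := by
      rw [show v 0 = Ideal.Quotient.mk J 1 from rfl, hmul, one_mul]
      exact Submodule.subset_span ⟨1, rfl⟩
    have k01 : v 0 * Ideal.Quotient.mk J (X 1) ∈ Submodule.span ℚ (Set.range v) := by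
      rw [show v 0 = Ideal.Quotient.mk J 1 from rfl, hmul, one_mul]
      exact Submodule.subset_span ⟨4, rfl⟩
    have k10 : v 1 * Ideal.Quotient.mk J (X 0) ∈ Submodule.span ℚ (Set.range v) := by
      rw [show v 1 = Ideal.Quotient.mk J (X 0) from rfl, hmul,
        show (X 0 * X 0 : R2) = X 0 ^ 2 from by ring]
      exact Submodule.subset_span ⟨2, rfl⟩
    have k11 : v 1 * Ideal.Quotient.mk J (X 1) ∈ Submodule.span ℚ (Set.range v) := by
      rw [show v 1 = Ideal.Quotient.mk J (X 0) from rfl, hmul,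
        Ideal.Quotient.eq_zero_iff_mem.mpr hg1]
      exact Submodule.zero_mem _
    have k20 : v 2 * Ideal.Quotient.mk J (X 0) ∈ Submodule.span ℚ (Set.range v) := by
      rw [show v 2 = Ideal.Quotient.mk J (X 0 ^ 2) from rfl, hmul,
        show (X 0 ^ 2 * X 0 : R2) = X 0 ^ 3 from by ring]
      exact Submodule.subset_span ⟨3, rfl⟩
    have k21 : v 2 * Ideal.Quotient.mk J (X 1) ∈ Submodule.span ℚ (Set.range v) := by
      rw [show v 2 = Ideal.Quotient.mk J (X 0 ^ 2) from rfl, hmul,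
        Ideal.Quotient.eq_zero_iff_mem.mpr ?_]
      · exact Submodule.zero_mem _
      · have := Ideal.mul_mem_left J (X 0) hg1
        rwa [show (X 0 : R2) * (X 0 * X 1) = X 0 ^ 2 * X 1 from by ring] at this
    have k30 : v 3 * Ideal.Quotient.mk J (X 0) ∈ Submodule.span ℚ (Set.range v) := by
      rw [show v 3 = Ideal.Quotient.mk J (X 0 ^ 3) from rfl, hmul,
        Ideal.Quotient.eq_zero_iff_mem.mpr ?_]
      · exact Submodule.zero_mem _
      · rwa [show (X 0 : R2) ^ 3 * X 0 = X 0 ^ 4 from by ring]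
    have k31 : v 3 * Ideal.Quotient.mk J (X 1) ∈ Submodule.span ℚ (Set.range v) := by
      rw [show v 3 = Ideal.Quotient.mk J (X 0 ^ 3) from rfl, hmul,
        Ideal.Quotient.eq_zero_iff_mem.mpr ?_]
      · exact Submodule.zero_mem _
      · have := Ideal.mul_mem_left J (X 0 ^ 2) hg1
        rwa [show (X 0 : R2) ^ 2 * (X 0 * X 1) = X 0 ^ 3 * X 1 from by ring] at this
    have k40 : v 4 * Ideal.Quotient.mk J (X 0) ∈ Submodule.span ℚ (Set.range v) := by
      rw [show v 4 = Ideal.Quotient.mk J (X 1) from rfl, hmul,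
        Ideal.Quotient.eq_zero_iff_mem.mpr ?_]
      · exact Submodule.zero_mem _
      · rwa [show (X 1 : R2) * X 0 = X 0 * X 1 from by ring]
    have k41 : v 4 * Ideal.Quotient.mk J (X 1) ∈ Submodule.span ℚ (Set.range v) := by
      have h1 : Ideal.Quotient.mk J (X 1 * X 1) = Ideal.Quotient.mk J (C (2/9 : ℚ) * X 0 ^ 3) := by
        rw [Ideal.Quotient.eq]
        rwa [show (X 1 : R2) * X 1 - C (2/9 : ℚ) * X 0 ^ 3
          = X 1 ^ 2 - C (2/9 : ℚ) * X 0 ^ 3 from by ring]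
      rw [show v 4 = Ideal.Quotient.mk J (X 1) from rfl, hmul, h1,
        show (C (2/9 : ℚ) * X 0 ^ 3 : R2) = (2/9 : ℚ) • (X 0 ^ 3) from by rw [smul_eq_C_mul],
        hmk_smul]
      exact Submodule.smul_mem _ _ (Submodule.subset_span ⟨3, rfl⟩)
    intro i n
    fin_cases i <;> fin_cases n
    exacts [k00, k01, k10, k11, k20, k21, k30, k31, k40, k41]
  -- spanning
  have hsp : ⊤ ≤ Submodule.span ℚ (Set.range v) := by
    rintro x -
    obtain ⟨p, rfl⟩ := Ideal.Quotient.mk_surjective x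
    induction p using MvPolynomial.induction_on with
    | C a =>
      rw [show (C a : R2) = a • (1 : R2) from by rw [smul_eq_C_mul, mul_one], hmk_smul]
      exact Submodule.smul_mem _ _ (Submodule.subset_span ⟨0, rfl⟩)
    | add p q hp hq =>
      rw [map_add]
      exact Submodule.add_mem _ hp hq
    | mul_X p n hp =>
      obtain ⟨c, hc⟩ := (Submodule.mem_span_range_iff_exists_fun ℚ).mp hp
      rw [map_mul, ← hc, Finset.sum_mul]
      exact Submodule.sum_mem _ fun i _ => by
        rw [smul_mul_assoc]
        exact Submodule.smul_mem _ _ (key i n)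
  refine ⟨Module.Basis.mk hli hsp, fun i => ?_⟩
  rw [Module.Basis.mk_apply]
end
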